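/- Let a, b, c, d, α, β be positive real numbers such that a ≤ c, b ≤ d, βd ≤ αb, and such that ψ(a+bt) > 0 and ψ(c+dt) > 0 for all t ∈ [0,∞). Then the function U(t) = [ψ(a+bt)]^α / [ψ(c+dt)]^β is non-decreasing on [0,∞). -/

import Mathlib

/-- The digamma (psi) function: logarithmic derivative of the Gamma function. -/
noncomputable def psi (t : ℝ) : ℝ := deriv Real.Gamma t / Real.Gamma t

open Real Set Filter

private lemma gamma_diff {x : ℝ} (hx : 0 < x) : DifferentiableAt ℝ Real.Gamma x :=
  Real.differentiableAt_Gamma fun m =>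
    (((neg_nonpos.mpr (Nat.cast_nonneg m)).trans_lt hx).ne')

private lemma deriv_logGamma {x : ℝ} (hx : 0 < x) :
    deriv (fun y => Real.log (Real.Gamma y)) x = psi x := by
  rw [deriv.log (gamma_diff hx) (Real.Gamma_pos_of_pos hx).ne']
  rfl

/-- ψ is monotone on positive reals. -/
private lemma psi_mono {x y : ℝ} (hx : 0 < x) (hxy : x ≤ y) : psi x ≤ psi y := by
  have hy : 0 < y := hx.trans_le hxy
  have hconv : ConvexOn ℝ (Ioi (0:ℝ)) (fun y => Real.log (Real.Gamma y)) := by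
    simpa [Function.comp_def] using Real.convexOn_log_Gamma
  have hmono := hconv.monotoneOn_deriv (fun z hz =>
    (gamma_diff (mem_Ioi.mp hz)).log (Real.Gamma_pos_of_pos (mem_Ioi.mp hz)).ne')
  rw [← deriv_logGamma hx, ← deriv_logGamma hy]
  exact hmono (mem_Ioi.mpr hx) (mem_Ioi.mpr hy) hxy

private lemma psi_add_one {x : ℝ} (hx : 0 < x) : psi (x + 1) = psi x + 1 / x := by
  have hx1 : (0:ℝ) < x + 1 := by linarith
  have hG := (gamma_diff hx).hasDerivAt
  have h1 : HasDerivAt (fun y => Real.Gamma (y + 1)) (deriv Real.Gamma (x + 1)) x :=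
    HasDerivAt.comp_add_const x 1 (gamma_diff hx1).hasDerivAt
  have h2 : HasDerivAt (fun y => y * Real.Gamma y)
      (Real.Gamma x + x * deriv Real.Gamma x) x := by
    have : HasDerivAt (fun y => y * Real.Gamma y) (1 * Real.Gamma x + x * deriv Real.Gamma x) x :=
      (hasDerivAt_id' x).mul hG
    simpa [add_comm] using this
  have heq : (fun y => Real.Gamma (y + 1)) =ᶠ[nhds x] fun y => y * Real.Gamma y := by
    filter_upwards [eventually_gt_nhds hx] with y hy
    exact Real.Gamma_add_one hy.ne'
  have h1' := h1.congr_of_eventuallyEq heq.symm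
  have hud : deriv Real.Gamma (x + 1) = Real.Gamma x + x * deriv Real.Gamma x :=
    h1'.unique h2
  have hΓ : Real.Gamma x ≠ 0 := (Real.Gamma_pos_of_pos hx).ne'
  unfold psi
  rw [hud, Real.Gamma_add_one hx.ne']
  field_simp
  ring

private lemma psi_add_nat {x : ℝ} (hx : 0 < x) (n : ℕ) :
    psi (x + n) = psi x + ∑ k ∈ Finset.range n, (x + (k:ℝ))⁻¹ := by
  induction n with
  | zero => simp
  | succ n ih =>
    have h : x + ((n+1 : ℕ) : ℝ) = (x + n) + 1 := by push_cast; ring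
    have hxn : (0:ℝ) < x + n := by positivity
    rw [h, psi_add_one hxn, ih, Finset.sum_range_succ, one_div]
    ring

private lemma psi_diff_le {x y : ℝ} (hx : 0 < x) (hxy : x ≤ y) (m : ℕ)
    (hm : y ≤ x + m) : psi y ≤ psi x + m / x := by
  have h1 : psi y ≤ psi (x + m) := psi_mono (hx.trans_le hxy) hm
  rw [psi_add_nat hx m] at h1
  have h2 : ∑ k ∈ Finset.range m, (x + (k:ℝ))⁻¹ ≤ (m:ℝ) / x := by
    calc ∑ k ∈ Finset.range m, (x + (k:ℝ))⁻¹
        ≤ ∑ _k ∈ Finset.range m, x⁻¹ := by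
          refine Finset.sum_le_sum fun k _ => ?_
          exact inv_anti₀ hx (le_add_of_nonneg_right (Nat.cast_nonneg k))
      _ = (m:ℝ) / x := by
          rw [Finset.sum_const, Finset.card_range, nsmul_eq_mul, div_eq_mul_inv]
  linarith

private lemma inv_combo {x y p q : ℝ} (hx : 0 < x) (hy : 0 < y) (hp : 0 ≤ p)
    (hq : 0 ≤ q) (hpq : p + q = 1) : (p * x + q * y)⁻¹ ≤ p * x⁻¹ + q * y⁻¹ := by
  have hz : 0 < p * x + q * y := by
    nlinarith [lt_min hx hy, mul_le_mul_of_nonneg_left (min_le_left x y) hp,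
      mul_le_mul_of_nonneg_left (min_le_right x y) hq]
  rw [← sub_nonneg]
  have key : p * x⁻¹ + q * y⁻¹ - (p * x + q * y)⁻¹ =
      (p * q * (x - y) ^ 2) / (x * y * (p * x + q * y)) := by
    field_simp
    linear_combination (x * y * (p + q + 1)) * hpq
  rw [key]
  positivity

private lemma psi_concave_aux {x y p q : ℝ} (hx : 0 < x) (hxy : x ≤ y) (hp : 0 ≤ p)
    (hq : 0 ≤ q) (hpq : p + q = 1) : p * psi x + q * psi y ≤ psi (p * x + q * y) := by
  have hy : 0 < y := hx.trans_le hxy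
  set z := p * x + q * y with hzdef
  have hxz : x ≤ z := by nlinarith
  have hzy : z ≤ y := by nlinarith
  have hz : 0 < z := hx.trans_le hxz
  set m : ℕ := ⌈y - x⌉₊ with hmdef
  have hm : y ≤ x + m := by
    have := Nat.le_ceil (y - x)
    linarith
  have key : ∀ n : ℕ, p * psi x + q * psi y ≤ psi z + m / (x + n) := by
    intro n
    have hxn : (0:ℝ) < x + n := by positivity
    have e1 := psi_add_nat hx n
    have e2 := psi_add_nat hy n
    have e3 := psi_add_nat hz n
    have hb : psi (y + n) ≤ psi (x + n) + m / (x + n) :=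
      psi_diff_le hxn (by linarith) m (by linarith)
    have hmono1 : psi (x + n) ≤ psi (z + n) := psi_mono hxn (by linarith)
    have hconvS : ∑ k ∈ Finset.range n, (z + (k:ℝ))⁻¹ ≤
        p * ∑ k ∈ Finset.range n, (x + (k:ℝ))⁻¹ +
        q * ∑ k ∈ Finset.range n, (y + (k:ℝ))⁻¹ := by
      rw [Finset.mul_sum, Finset.mul_sum, ← Finset.sum_add_distrib]
      refine Finset.sum_le_sum fun k _ => ?_
      have hxk : (0:ℝ) < x + k := by positivity
      have hyk : (0:ℝ) < y + k := by positivity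
      have hzk : z + (k:ℝ) = p * (x + k) + q * (y + k) := by
        rw [hzdef]; nlinarith
      rw [hzk]
      exact inv_combo hxk hyk hp hq hpq
    have f3 : q * psi (y + n) ≤ q * (psi (x + n) + m / (x + n)) :=
      mul_le_mul_of_nonneg_left hb hq
    have f8 : q * ((m:ℝ) / (x + n)) ≤ (m:ℝ) / (x + n) := by
      have hnn : (0:ℝ) ≤ (m:ℝ) / (x + n) := by positivity
      nlinarith
    have g1 : p * psi (x + n) = p * psi x + p * ∑ k ∈ Finset.range n, (x + (k:ℝ))⁻¹ := by
      rw [e1]; ring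
    have g2 : q * psi (y + n) = q * psi y + q * ∑ k ∈ Finset.range n, (y + (k:ℝ))⁻¹ := by
      rw [e2]; ring
    have g3 : p * psi (x + n) + q * psi (x + n) = psi (x + n) := by
      rw [← add_mul, hpq, one_mul]
    linarith [g1, g2, g3, f3, f8, hmono1, e3, hconvS]
  have htend : Tendsto (fun n : ℕ => psi z + (m:ℝ) / (x + n)) atTop (nhds (psi z + 0)) := by
    refine tendsto_const_nhds.add ?_
    refine Tendsto.div_atTop tendsto_const_nhds ?_
    exact tendsto_atTop_add_const_left _ x tendsto_natCast_atTop_atTop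
  have := ge_of_tendsto htend (Filter.Eventually.of_forall key)
  simpa using this

/-- ψ is concave on positive reals. -/
private lemma psi_concave {x y p q : ℝ} (hx : 0 < x) (hy : 0 < y) (hp : 0 ≤ p)
    (hq : 0 ≤ q) (hpq : p + q = 1) : p * psi x + q * psi y ≤ psi (p * x + q * y) := by
  rcases le_total x y with h | h
  · exact psi_concave_aux hx h hp hq hpq
  · have := psi_concave_aux hy h hq hp (by linarith)
    calc p * psi x + q * psi y = q * psi y + p * psi x := by ring
      _ ≤ psi (q * y + p * x) := this
      _ = psi (p * x + q * y) := by ring_nf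

set_option maxHeartbeats 1600000 in
theorem U_monotone (a b c d α β : ℝ) (ha : 0 < a) (hb : 0 < b) (hc : 0 < c)
    (hd : 0 < d) (hα : 0 < α) (hβ : 0 < β) (hac : a ≤ c) (hbd : b ≤ d)
    (hβdαb : β * d ≤ α * b)
    (hpos : ∀ t : ℝ, 0 ≤ t → 0 < psi (a + b * t) ∧ 0 < psi (c + d * t)) :
    MonotoneOn (fun t : ℝ => psi (a + b * t) ^ α / psi (c + d * t) ^ β)
      (Set.Ici 0) := by
  intro s hs t ht hst
  simp only [Set.mem_Ici] at hs ht
  dsimp only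
  obtain ⟨hU1, hV1⟩ := hpos s hs
  obtain ⟨hU2, hV2⟩ := hpos t ht
  set u1 := a + b * s with hu1def
  set u2 := a + b * t with hu2def
  set v1 := c + d * s with hv1def
  set v2 := c + d * t with hv2def
  have hu1 : (0:ℝ) < u1 := by positivity
  have hu2 : (0:ℝ) < u2 := by positivity
  have hv1 : (0:ℝ) < v1 := by positivity
  have hv2 : (0:ℝ) < v2 := by positivity
  set w := u1 + d * (t - s) with hwdef
  have hw : (0:ℝ) < w := by
    rw [hwdef]
    nlinarith [mul_nonneg hd.le (sub_nonneg.mpr hst)]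
  have hu1w : u1 ≤ w := by
    rw [hwdef]
    nlinarith [mul_nonneg hd.le (sub_nonneg.mpr hst)]
  have hpsiw : 0 < psi w := hU1.trans_le (psi_mono hu1 hu1w)
  have hrel : v2 = v1 + d * (t - s) := by rw [hv2def, hv1def]; ring
  have hrelu : u2 = u1 + b * (t - s) := by rw [hu2def, hu1def]; ring
  have hδ0 : 0 ≤ v1 - u1 := by
    rw [hv1def, hu1def]
    nlinarith [mul_nonneg (sub_nonneg.mpr hbd) hs]
  have huu : u1 ≤ u2 := by
    rw [hu1def, hu2def]
    nlinarith [mul_nonneg hb.le (sub_nonneg.mpr hst)]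
  clear_value u1 u2 v1 v2 w
  -- concavity of log ∘ psi at positive points with positive psi
  have hGcomb : ∀ x y p q : ℝ, 0 < x → 0 < y → 0 < psi x → 0 < psi y → 0 ≤ p → 0 ≤ q →
      p + q = 1 → p * Real.log (psi x) + q * Real.log (psi y) ≤
        Real.log (psi (p * x + q * y)) := by
    intro x y p q hx hy hpx hpy hp hq hpq
    have h1 : p * psi x + q * psi y ≤ psi (p * x + q * y) := psi_concave hx hy hp hq hpq
    have h2 : 0 < p * psi x + q * psi y := by
      nlinarith [lt_min hpx hpy, mul_le_mul_of_nonneg_left (min_le_left (psi x) (psi y)) hp,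
        mul_le_mul_of_nonneg_left (min_le_right (psi x) (psi y)) hq]
    calc p * Real.log (psi x) + q * Real.log (psi y)
        ≤ Real.log (p * psi x + q * psi y) := by
          have := strictConcaveOn_log_Ioi.concaveOn.2 (mem_Ioi.mpr hpx) (mem_Ioi.mpr hpy)
            hp hq hpq
          simpa [smul_eq_mul] using this
      _ ≤ Real.log (psi (p * x + q * y)) := Real.log_le_log h2 h1
  set A := Real.log (psi u1) with hA
  set B := Real.log (psi u2) with hB
  set C := Real.log (psi v1) with hC
  set D := Real.log (psi v2) with hD
  set W := Real.log (psi w) with hW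
  -- step 1 : A + D ≤ C + W
  have hδ : 0 ≤ v1 - u1 := hδ0
  have hh : 0 ≤ d * (t - s) := mul_nonneg hd.le (sub_nonneg.mpr hst)
  have st1 : A + D ≤ C + W := by
    set δ := v1 - u1 with hδdef
    set h := d * (t - s) with hhdef
    rcases eq_or_lt_of_le (add_nonneg hδ hh) with heq | hlt
    · -- δ = 0 and h = 0
      have hδ0 : δ = 0 := by linarith
      have hh0 : h = 0 := by linarith
      have hv1u1 : v1 = u1 := by rw [hδdef] at hδ0; linarith
      have hv2eq : v2 = v1 := by
        rw [hrel, hh0, add_zero]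
      have hwu : w = u1 := by rw [hwdef, hh0, add_zero]
      rw [hA, hC, hD, hW, hv2eq, hv1u1, hwu]
    · have hS : (0:ℝ) < δ + h := hlt
      set lam := h / (δ + h) with hlam
      set mu := δ / (δ + h) with hmu
      have hlam0 : 0 ≤ lam := by positivity
      have hmu0 : 0 ≤ mu := by positivity
      have hsum : lam + mu = 1 := by
        rw [hlam, hmu, ← add_div, div_eq_one_iff_eq hS.ne']
        ring
      have hv2' : v2 = u1 + δ + h := by rw [hrel, hδdef]; ring
      have hv1' : v1 = u1 + δ := by rw [hδdef]; ring
      have hw' : w = u1 + h := hwdef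
      have hp1 : lam * u1 + mu * v2 = v1 := by
        rw [hlam, hmu, hv2', hv1']
        field_simp
        ring
      have hp2 : mu * u1 + lam * v2 = w := by
        rw [hlam, hmu, hv2', hw']
        field_simp
        ring
      have i1 := hGcomb u1 v2 lam mu hu1 hv2 hU1 hV2 hlam0 hmu0 hsum
      have i2 := hGcomb u1 v2 mu lam hu1 hv2 hU1 hV2 hmu0 hlam0 (by linarith)
      rw [hp1] at i1
      rw [hp2] at i2
      rw [hA, hC, hD, hW]
      have hadd := add_le_add i1 i2
      have hAD : lam * Real.log (psi u1) + mu * Real.log (psi v2) +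
          (mu * Real.log (psi u1) + lam * Real.log (psi v2)) =
          Real.log (psi u1) + Real.log (psi v2) := by
        linear_combination (Real.log (psi u1) + Real.log (psi v2)) * hsum
      linarith [hadd, hAD]
  -- step 2 : b * (W - A) ≤ d * (B - A)
  have st2 : b * (W - A) ≤ d * (B - A) := by
    have hbd' : b / d ≤ 1 := (div_le_one hd).mpr hbd
    have hbd0 : 0 ≤ b / d := by positivity
    have hcomb := hGcomb u1 w (1 - b / d) (b / d) hu1 hw hU1 hpsiw
      (by linarith) hbd0 (by ring)
    have hpt : (1 - b / d) * u1 + (b / d) * w = u2 := by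
      rw [hwdef, hrelu]
      field_simp
      ring
    rw [hpt] at hcomb
    rw [hA, hB, hW]
    have hmul := mul_le_mul_of_nonneg_left hcomb hd.le
    have hexp : d * ((1 - b / d) * Real.log (psi u1) + b / d * Real.log (psi w))
        = (d - b) * Real.log (psi u1) + b * Real.log (psi w) := by
      field_simp
    linarith [hmul, hexp]
  -- step 3 : A ≤ B
  have st3 : A ≤ B := by
    rw [hA, hB]
    have : psi u1 ≤ psi u2 := psi_mono hu1 huu
    exact Real.log_le_log hU1 this
  -- conclude
  show psi u1 ^ α / psi v1 ^ β ≤ psi u2 ^ α / psi v2 ^ β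
  rw [div_le_div_iff₀ (by positivity) (by positivity)]
  have hL : (0:ℝ) < psi u1 ^ α * psi v2 ^ β := by positivity
  have hR : (0:ℝ) < psi u2 ^ α * psi v1 ^ β := by positivity
  refine (Real.log_le_log_iff hL hR).mp ?_
  rw [Real.log_mul (by positivity) (by positivity),
    Real.log_mul (by positivity) (by positivity),
    Real.log_rpow hU1, Real.log_rpow hV2, Real.log_rpow hU2, Real.log_rpow hV1]
  rw [← hA, ← hB, ← hC, ← hD]
  -- goal : α * A + β * D ≤ α * B + β * C
  have main : b * (α * A + β * D) ≤ b * (α * B + β * C) := by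
    nlinarith [mul_le_mul_of_nonneg_left st1 (mul_nonneg hb.le hβ.le),
      mul_le_mul_of_nonneg_left st2 hβ.le,
      mul_nonneg (sub_nonneg.mpr hβdαb) (sub_nonneg.mpr st3)]
  exact le_of_mul_le_mul_left main hb
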